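/- There exist constants C3, C4 in (0,∞) such that for all sufficiently large natural numbers N and all β > 0: ∑_{n=1}^{N} csch(γ_{θ_n}(β)) ≤ C3·N·ln N and ∑_{n=1}^{N} csch(γ_{θ_n}(β))² ≤ C4·N², where θ_n = π(2n−1)/(2N). -/

import Mathlib

open Filter Finset

/-- The hyperbolic cotangent. -/
noncomputable def coth (x : ℝ) : ℝ := Real.cosh x / Real.sinh x

/-- The hyperbolic cosecant. -/
noncomputable def csch (x : ℝ) : ℝ := 1 / Real.sinh x

lemma sum_inv_sq_le (N : ℕ) : ∑ n ∈ Finset.Icc 1 N, (1:ℝ)/(n:ℝ)^2 ≤ 2 := by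
  have key : ∀ N : ℕ, 1 ≤ N → ∑ n ∈ Finset.Icc 1 N, (1:ℝ)/(n:ℝ)^2 ≤ 2 - 1/N := by
    intro N hN
    induction N with
    | zero => omega
    | succ M ih =>
      rcases Nat.eq_or_lt_of_le hN with h|h
      · simp [← h]; norm_num
      · have hM : 1 ≤ M := by omega
        rw [Finset.sum_Icc_succ_top (by omega)]
        have hM0 : (0:ℝ) < M := by exact_mod_cast hM
        have h1 : (1:ℝ)/((M:ℝ)+1)^2 ≤ 1/M - 1/(M+1) := by
          rw [div_sub_div _ _ (ne_of_gt hM0) (by positivity : ((M:ℝ)+1) ≠ 0),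
            div_le_div_iff₀ (by positivity) (by positivity)]
          nlinarith
        have := ih hM
        push_cast
        linarith
  rcases Nat.eq_zero_or_pos N with rfl|h
  · simp
  · have h1 := key N h
    have h2 : (0:ℝ) < N := by exact_mod_cast h
    have h3 : (0:ℝ) < 1/(N:ℝ) := by positivity
    linarith

lemma sum_inv_le (N : ℕ) : ∑ n ∈ Finset.Icc 1 N, (1:ℝ)/(n:ℝ) ≤ 1 + Real.log N := by
  have h := harmonic_le_one_add_log N
  rw [harmonic_eq_sum_Icc] at h
  push_cast at h
  simpa [one_div] using h

lemma csch_bound {g θ : ℝ} (hθ1 : 0 < θ) (hθ2 : θ ≤ Real.pi) (hg0 : 0 ≤ g)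
    (h : 2 - Real.cos θ ≤ Real.cosh g) :
    0 < Real.sinh g ∧ csch g ≤ Real.pi / (2 * θ) := by
  have hs2 : Real.sin (θ/2) ^ 2 = (1 - Real.cos θ)/2 := by
    rw [Real.sin_sq_eq_half_sub]; ring_nf
  have hsinpos : 0 < Real.sin (θ/2) :=
    Real.sin_pos_of_pos_of_lt_pi (by linarith) (by linarith [Real.pi_pos])
  have hjordan : θ / Real.pi ≤ Real.sin (θ/2) := by
    calc θ / Real.pi = 2 / Real.pi * (θ/2) := by ring
    _ ≤ Real.sin (θ/2) := Real.mul_le_sin (x := θ/2) (by linarith) (by linarith)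
  have hcosh : Real.cosh g ^ 2 = Real.sinh g ^ 2 + 1 := Real.cosh_sq g
  have hsh0 : 0 ≤ Real.sinh g := Real.sinh_nonneg_iff.mpr hg0
  have hc1 : 1 ≤ Real.cosh g := Real.one_le_cosh g
  have hkey : (2 * Real.sin (θ/2))^2 ≤ Real.sinh g ^ 2 := by
    have hcos : 1 - Real.cos θ = 2 * Real.sin (θ/2)^2 := by linarith
    nlinarith [Real.cos_le_one θ]
  have hsinh : 2 * Real.sin (θ/2) ≤ Real.sinh g := by
    nlinarith
  have hshpos : 0 < Real.sinh g := by linarith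
  refine ⟨hshpos, ?_⟩
  rw [csch, div_le_div_iff₀ hshpos (by linarith)]
  have hπ : (0:ℝ) < Real.pi := Real.pi_pos
  calc 1 * (2*θ) = Real.pi * (2 * (θ/Real.pi)) := by field_simp
  _ ≤ Real.pi * (2 * Real.sin (θ/2)) := by nlinarith
  _ ≤ Real.pi * Real.sinh g := by nlinarith

/-- There exist constants `C3, C4 ∈ (0,∞)` such that for all sufficiently large `N` and
all `β > 0`: `∑_{n=1}^{N} csch(γ_{θ_n}(β)) ≤ C3·N·ln N` and
`∑_{n=1}^{N} csch(γ_{θ_n}(β))² ≤ C4·N²`, where `θ_n = π(2n−1)/(2N)` and `γ_θ(β)` is the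
unique `γ ≥ 0` with `cosh γ = coth(2β)cosh(2β) − cos θ`. -/
theorem stmt4 (γ : ℝ → ℝ → ℝ)
    (hγ : ∀ β > (0 : ℝ), ∀ θ ∈ Set.Ioc 0 Real.pi,
      0 ≤ γ β θ ∧ Real.cosh (γ β θ) = coth (2 * β) * Real.cosh (2 * β) - Real.cos θ) :
    ∃ C3 C4 : ℝ, 0 < C3 ∧ 0 < C4 ∧ ∀ᶠ N : ℕ in atTop, ∀ β > (0 : ℝ),
      (∑ n ∈ Finset.Icc 1 N,
          csch (γ β (Real.pi * (2 * (n : ℝ) - 1) / (2 * N)))) ≤ C3 * N * Real.log N ∧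
      (∑ n ∈ Finset.Icc 1 N,
          (csch (γ β (Real.pi * (2 * (n : ℝ) - 1) / (2 * N)))) ^ 2) ≤ C4 * N ^ 2 := by
  refine ⟨2, 2, by norm_num, by norm_num, ?_⟩
  filter_upwards [eventually_ge_atTop 3] with N hN β hβ
  have hπ : (0:ℝ) < Real.pi := Real.pi_pos
  have hNpos : (0:ℝ) < N := by exact_mod_cast (by omega : 0 < N)
  -- coth(2β)*cosh(2β) ≥ 2
  have hs : 0 < Real.sinh (2*β) := Real.sinh_pos_iff.mpr (by linarith)
  have hcc : 2 ≤ coth (2*β) * Real.cosh (2*β) := by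
    rw [coth]
    rw [div_mul_eq_mul_div, le_div_iff₀ hs]
    have h1 := Real.cosh_sq (2*β)
    nlinarith [sq_nonneg (Real.sinh (2*β) - 1)]
  -- per-term bound
  have hterm : ∀ n ∈ Finset.Icc 1 N,
      0 ≤ csch (γ β (Real.pi * (2 * (n : ℝ) - 1) / (2 * N))) ∧
      csch (γ β (Real.pi * (2 * (n : ℝ) - 1) / (2 * N))) ≤ (N:ℝ)/n := by
    intro n hn
    rw [Finset.mem_Icc] at hn
    set θ := Real.pi * (2 * (n : ℝ) - 1) / (2 * N) with hθdef
    have hn1 : (1:ℝ) ≤ n := by exact_mod_cast hn.1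
    have hnN : (n:ℝ) ≤ N := by exact_mod_cast hn.2
    have hθpos : 0 < θ := by
      apply div_pos (by nlinarith) (by linarith)
    have hθle : θ ≤ Real.pi := by
      rw [div_le_iff₀ (by linarith)]
      nlinarith
    obtain ⟨hg0, hgeq⟩ := hγ β hβ θ ⟨hθpos, hθle⟩
    have hge : 2 - Real.cos θ ≤ Real.cosh (γ β θ) := by
      rw [hgeq]; linarith
    obtain ⟨hshpos, hle⟩ := csch_bound hθpos hθle hg0 hge
    constructor
    · rw [csch]; positivity
    · refine hle.trans ?_
      have h2n : (0:ℝ) < 2*(n:ℝ)-1 := by linarith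
      have : Real.pi / (2*θ) = (N:ℝ)/(2*(n:ℝ)-1) := by
        rw [hθdef]
        field_simp
      rw [this]
      apply div_le_div_of_nonneg_left (by linarith) (by linarith) (by linarith)
  constructor
  · calc ∑ n ∈ Finset.Icc 1 N, csch (γ β (Real.pi * (2 * (n : ℝ) - 1) / (2 * N)))
        ≤ ∑ n ∈ Finset.Icc 1 N, (N:ℝ)/n := Finset.sum_le_sum (fun n hn => (hterm n hn).2)
    _ = N * ∑ n ∈ Finset.Icc 1 N, (1:ℝ)/n := by rw [Finset.mul_sum]; apply Finset.sum_congr rfl; intros; ring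
    _ ≤ N * (1 + Real.log N) := by
        apply mul_le_mul_of_nonneg_left (sum_inv_le N) (le_of_lt hNpos)
    _ ≤ 2 * N * Real.log N := by
        have hlog : 1 ≤ Real.log N := by
          rw [Real.le_log_iff_exp_le (by linarith)]
          calc Real.exp 1 ≤ 2.7182818286 := Real.exp_one_lt_d9.le
          _ ≤ (3:ℝ) := by norm_num
          _ ≤ N := by exact_mod_cast hN
        nlinarith
  · calc ∑ n ∈ Finset.Icc 1 N, csch (γ β (Real.pi * (2 * (n : ℝ) - 1) / (2 * N)))^2
        ≤ ∑ n ∈ Finset.Icc 1 N, ((N:ℝ)/n)^2 := by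
          apply Finset.sum_le_sum
          intro n hn
          exact pow_le_pow_left₀ (hterm n hn).1 (hterm n hn).2 2
    _ = N^2 * ∑ n ∈ Finset.Icc 1 N, (1:ℝ)/(n:ℝ)^2 := by
        rw [Finset.mul_sum]; apply Finset.sum_congr rfl; intros; rw [div_pow]; ring
    _ ≤ N^2 * 2 := by
        apply mul_le_mul_of_nonneg_left (sum_inv_sq_le N) (by positivity)
    _ = 2 * N^2 := by ring
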